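/- Let M and L be sequences of positive reals, f ∈ F^M, and g ∈ F^L with g_0 = 0. Then the formal composite f ∘ g belongs to F^{M∘L}, where (M∘L)_k := max{ M_j · L_{α_1} ⋯ L_{α_j} : j ≥ 1, α_i ∈ ℕ_{>0}, α_1 + ⋯ + α_j = k }. -/

import Mathlib

/-- Membership in the formal power series class `𝓕^M`. -/
def InFclass (M : ℕ → ℝ) (f : ℕ → ℝ) : Prop :=
  ∃ C : ℝ, 0 < C ∧ ∃ ρ : ℝ, 0 < ρ ∧
    ∀ k, |f k| ≤ C * ρ ^ k * (k.factorial : ℝ) * M k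

/-- Coefficients of the formal composite `f ∘ g` (for `g 0 = 0`),
via Faà di Bruno's formula. -/
noncomputable def compCoeff (f g : ℕ → ℝ) : ℕ → ℝ := fun k =>
  if k = 0 then f 0 else
    (k.factorial : ℝ) * ∑ j ∈ Finset.Icc 1 k, (f j / (j.factorial : ℝ)) *
      ∑ α ∈ (Finset.Nat.antidiagonalTuple j k).filter (fun α => ∀ i, 0 < α i),
        ∏ i, g (α i) / ((α i).factorial : ℝ)

/-- The composed weight sequence `(M ∘ L)_k = max { M_j L_{α₁} ⋯ L_{α_j} }`. -/
noncomputable def seqComp (M L : ℕ → ℝ) : ℕ → ℝ := fun k =>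
  if k = 0 then M 0 else
    sSup {x : ℝ | ∃ j : ℕ, 1 ≤ j ∧ ∃ α : Fin j → ℕ,
      (∀ i, 0 < α i) ∧ (∑ i, α i) = k ∧ x = M j * ∏ i, L (α i)}

open Finset

lemma geo_sum_icc (k : ℕ) :
    ∑ a ∈ Finset.Icc 1 k, ((2:ℝ)⁻¹) ^ a = 1 - (2:ℝ)⁻¹ ^ k := by
  induction k with
  | zero => simp
  | succ n ih =>
      rw [Finset.sum_Icc_succ_top (by omega : 1 ≤ n + 1), ih, pow_succ]
      ring

lemma sum_prod_half_le_one (j k : ℕ) :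
    ∑ α ∈ (Finset.Nat.antidiagonalTuple j k).filter (fun α => ∀ i, 0 < α i),
      ∏ i, ((2:ℝ)⁻¹) ^ (α i) ≤ 1 := by
  have hsub : (Finset.Nat.antidiagonalTuple j k).filter (fun α => ∀ i, 0 < α i)
      ⊆ Fintype.piFinset (fun _ : Fin j => Finset.Icc 1 k) := by
    intro α hα
    rw [Finset.mem_filter, Finset.Nat.mem_antidiagonalTuple] at hα
    rw [Fintype.mem_piFinset]
    intro i
    rw [Finset.mem_Icc]
    exact ⟨hα.2 i, hα.1 ▸ Finset.single_le_sum (fun i _ => Nat.zero_le _) (Finset.mem_univ i)⟩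
  calc ∑ α ∈ (Finset.Nat.antidiagonalTuple j k).filter (fun α => ∀ i, 0 < α i),
        ∏ i, ((2:ℝ)⁻¹) ^ (α i)
      ≤ ∑ α ∈ Fintype.piFinset (fun _ : Fin j => Finset.Icc 1 k),
        ∏ i, ((2:ℝ)⁻¹) ^ (α i) := by
        refine Finset.sum_le_sum_of_subset_of_nonneg hsub (fun α _ _ => ?_)
        exact Finset.prod_nonneg fun i _ => by positivity
    _ = ∏ _i : Fin j, ∑ a ∈ Finset.Icc 1 k, ((2:ℝ)⁻¹) ^ a := by
        rw [Finset.prod_univ_sum]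
    _ = (1 - (2:ℝ)⁻¹ ^ k) ^ j := by
        rw [geo_sum_icc, Finset.prod_const, Finset.card_univ, Fintype.card_fin]
    _ ≤ 1 := by
        apply pow_le_one₀
        · have : (2:ℝ)⁻¹ ^ k ≤ 1 := pow_le_one₀ (by norm_num) (by norm_num)
          linarith
        · have : (0:ℝ) < (2:ℝ)⁻¹ ^ k := by positivity
          linarith

lemma le_seqComp (M L : ℕ → ℝ) (hM : ∀ k, 0 < M k) (hL : ∀ k, 0 < L k)
    (k : ℕ) (hk : k ≠ 0) (j : ℕ) (hj : 1 ≤ j) (α : Fin j → ℕ)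
    (hpos : ∀ i, 0 < α i) (hsum : (∑ i, α i) = k) :
    M j * ∏ i, L (α i) ≤ seqComp M L k := by
  classical
  rw [seqComp]
  simp only [if_neg hk]
  set T : Finset ℝ := (Finset.Icc 1 k).biUnion (fun j =>
    ((Finset.Nat.antidiagonalTuple j k).filter (fun α => ∀ i, 0 < α i)).image
      (fun α => M j * ∏ i, L (α i))) with hT
  have hbdd : BddAbove {x : ℝ | ∃ j : ℕ, 1 ≤ j ∧ ∃ α : Fin j → ℕ,
      (∀ i, 0 < α i) ∧ (∑ i, α i) = k ∧ x = M j * ∏ i, L (α i)} := by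
    apply Set.Finite.bddAbove
    apply Set.Finite.subset T.finite_toSet
    rintro x ⟨j', hj', α', hpos', hsum', rfl⟩
    have hjk : j' ≤ k := by
      calc j' = ∑ _i : Fin j', 1 := by simp
        _ ≤ ∑ i, α' i := Finset.sum_le_sum fun i _ => hpos' i
        _ = k := hsum'
    simp only [hT, Finset.coe_biUnion, Set.mem_iUnion, Finset.mem_coe, Finset.mem_Icc,
      Finset.mem_image, Finset.mem_filter, Finset.Nat.mem_antidiagonalTuple]
    exact ⟨j', ⟨⟨hj', hjk⟩, α', ⟨hsum', hpos'⟩, rfl⟩⟩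
  exact le_csSup hbdd ⟨j, hj, α, hpos, hsum, rfl⟩

lemma seqComp_pos (M L : ℕ → ℝ) (hM : ∀ k, 0 < M k) (hL : ∀ k, 0 < L k) (k : ℕ) :
    0 < seqComp M L k := by
  rcases eq_or_ne k 0 with rfl | hk
  · simpa [seqComp] using hM 0
  · have h := le_seqComp M L hM hL k hk 1 le_rfl (fun _ => k)
      (fun _ => Nat.pos_of_ne_zero hk) (by simp)
    have : 0 < M 1 * ∏ _i : Fin 1, L k := by
      rw [Fin.prod_univ_one]; exact mul_pos (hM 1) (hL k)
    linarith

/-- Composition of formal power series: `𝓕^M ∘ 𝓕^L_{>0} ⊆ 𝓕^{M∘L}`. -/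
theorem stmt6 (M L : ℕ → ℝ) (hM : ∀ k, 0 < M k) (hL : ∀ k, 0 < L k)
    (f g : ℕ → ℝ) (hf : InFclass M f) (hg : InFclass L g) (hg0 : g 0 = 0) :
    InFclass (seqComp M L) (compCoeff f g) := by
  classical
  obtain ⟨Cf, hCf, ρf, hρf, hfb⟩ := hf
  obtain ⟨Cg, hCg, ρg, hρg, hgb⟩ := hg
  set B : ℝ := max 1 (ρf * Cg) with hB
  have hB1 : (1:ℝ) ≤ B := le_max_left _ _
  have hB0 : (0:ℝ) < B := lt_of_lt_of_le one_pos hB1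
  refine ⟨Cf, hCf, 4 * B * ρg, by positivity, ?_⟩
  intro k
  rcases eq_or_ne k 0 with rfl | hk
  · have := hfb 0
    simpa [compCoeff, seqComp] using this
  · rw [compCoeff, if_neg hk]
    set S := seqComp M L k with hSdef
    have hS : 0 < S := seqComp_pos M L hM hL k
    set A : ℝ := Cf * B ^ k * (2 * ρg) ^ k * S with hA
    have hA0 : 0 ≤ A := by positivity
    have hj_bound : ∀ j ∈ Finset.Icc 1 k,
        |f j / (j.factorial : ℝ) *
          ∑ α ∈ (Finset.Nat.antidiagonalTuple j k).filter (fun α => ∀ i, 0 < α i),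
            ∏ i, g (α i) / ((α i).factorial : ℝ)| ≤ A := by
      intro j hjmem
      rw [Finset.mem_Icc] at hjmem
      obtain ⟨hj1, hjk⟩ := hjmem
      have hfj : |f j| / (j.factorial : ℝ) ≤ Cf * ρf ^ j * M j := by
        rw [div_le_iff₀ (by positivity : (0:ℝ) < (j.factorial : ℝ))]
        calc |f j| ≤ Cf * ρf ^ j * (j.factorial : ℝ) * M j := hfb j
          _ = Cf * ρf ^ j * M j * (j.factorial : ℝ) := by ring
      calc |f j / (j.factorial : ℝ) *
            ∑ α ∈ (Finset.Nat.antidiagonalTuple j k).filter (fun α => ∀ i, 0 < α i),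
              ∏ i, g (α i) / ((α i).factorial : ℝ)|
          ≤ (|f j| / (j.factorial : ℝ)) *
            ∑ α ∈ (Finset.Nat.antidiagonalTuple j k).filter (fun α => ∀ i, 0 < α i),
              ∏ i, |g (α i)| / ((α i).factorial : ℝ) := by
            rw [abs_mul, abs_div, Nat.abs_cast]
            refine mul_le_mul_of_nonneg_left ?_ (by positivity)
            refine (Finset.abs_sum_le_sum_abs _ _).trans ?_
            refine Finset.sum_le_sum fun α _ => ?_
            rw [Finset.abs_prod]
            refine le_of_eq (Finset.prod_congr rfl fun i _ => ?_)
            rw [abs_div, Nat.abs_cast]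
        _ ≤ (Cf * ρf ^ j * M j) *
            ∑ α ∈ (Finset.Nat.antidiagonalTuple j k).filter (fun α => ∀ i, 0 < α i),
              ∏ i, (Cg * ρg ^ (α i) * L (α i)) := by
            refine mul_le_mul hfj ?_ ?_
              (mul_nonneg (mul_nonneg hCf.le (pow_nonneg hρf.le j)) (hM j).le)
            · refine Finset.sum_le_sum fun α _ => ?_
              refine Finset.prod_le_prod (fun i _ => by positivity) (fun i _ => ?_)
              rw [div_le_iff₀ (by positivity : (0:ℝ) < ((α i).factorial : ℝ))]
              calc |g (α i)| ≤ Cg * ρg ^ (α i) * ((α i).factorial : ℝ) * L (α i) := hgb (α i)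
                _ = Cg * ρg ^ (α i) * L (α i) * ((α i).factorial : ℝ) := by ring
            · exact Finset.sum_nonneg fun α _ =>
                Finset.prod_nonneg fun i _ => by positivity
        _ = ∑ α ∈ (Finset.Nat.antidiagonalTuple j k).filter (fun α => ∀ i, 0 < α i),
              (Cf * (ρf * Cg) ^ j * (2 * ρg) ^ k * (∏ i, ((2:ℝ)⁻¹) ^ (α i)) *
                (M j * ∏ i, L (α i))) := by
            rw [Finset.mul_sum]
            refine Finset.sum_congr rfl fun α hα => ?_
            rw [Finset.mem_filter, Finset.Nat.mem_antidiagonalTuple] at hα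
            have h1 : ∏ i, (Cg * ρg ^ (α i) * L (α i))
                = Cg ^ j * ρg ^ k * ∏ i, L (α i) := by
              rw [Finset.prod_mul_distrib, Finset.prod_mul_distrib, Finset.prod_const,
                Finset.card_univ, Fintype.card_fin, Finset.prod_pow_eq_pow_sum, hα.1]
            have h2 : (∏ i, ((2:ℝ)⁻¹) ^ (α i)) = ((2:ℝ)⁻¹) ^ k := by
              rw [Finset.prod_pow_eq_pow_sum, hα.1]
            have h3 : (2 * ρg) ^ k * ((2:ℝ)⁻¹) ^ k = ρg ^ k := by
              rw [← mul_pow]; congr 1; ring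
            rw [h1, h2, ← h3, mul_pow]
            ring
        _ ≤ ∑ α ∈ (Finset.Nat.antidiagonalTuple j k).filter (fun α => ∀ i, 0 < α i),
              (A * ∏ i, ((2:ℝ)⁻¹) ^ (α i)) := by
            refine Finset.sum_le_sum fun α hα => ?_
            rw [Finset.mem_filter, Finset.Nat.mem_antidiagonalTuple] at hα
            have hMLS : M j * ∏ i, L (α i) ≤ S :=
              le_seqComp M L hM hL k hk j hj1 α hα.2 hα.1
            have hBj : (ρf * Cg) ^ j ≤ B ^ k := by
              calc (ρf * Cg) ^ j ≤ B ^ j :=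
                    pow_le_pow_left₀ (mul_pos hρf hCg).le (le_max_right _ _) j
                _ ≤ B ^ k := pow_le_pow_right₀ hB1 hjk
            have hprod0 : 0 ≤ ∏ i, ((2:ℝ)⁻¹) ^ (α i) :=
              Finset.prod_nonneg fun i _ => by positivity
            have hML0 : 0 ≤ M j * ∏ i, L (α i) :=
              mul_nonneg (hM j).le (Finset.prod_nonneg fun i _ => (hL (α i)).le)
            have h4 : Cf * (ρf * Cg) ^ j ≤ Cf * B ^ k :=
              mul_le_mul_of_nonneg_left hBj hCf.le
            have hX : (0:ℝ) ≤ (2 * ρg) ^ k * ∏ i, ((2:ℝ)⁻¹) ^ (α i) :=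
              mul_nonneg (pow_nonneg (mul_pos two_pos hρg).le k) hprod0
            calc Cf * (ρf * Cg) ^ j * (2 * ρg) ^ k * (∏ i, ((2:ℝ)⁻¹) ^ (α i)) *
                  (M j * ∏ i, L (α i))
                = (Cf * (ρf * Cg) ^ j * ((2 * ρg) ^ k * ∏ i, ((2:ℝ)⁻¹) ^ (α i))) *
                  (M j * ∏ i, L (α i)) := by ring
              _ ≤ (Cf * B ^ k * ((2 * ρg) ^ k * ∏ i, ((2:ℝ)⁻¹) ^ (α i))) * S := by
                  refine mul_le_mul (mul_le_mul_of_nonneg_right h4 hX) hMLS hML0 ?_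
                  exact mul_nonneg (mul_nonneg hCf.le (pow_nonneg hB0.le k)) hX
              _ = A * ∏ i, ((2:ℝ)⁻¹) ^ (α i) := by rw [hA]; ring
        _ = A * ∑ α ∈ (Finset.Nat.antidiagonalTuple j k).filter (fun α => ∀ i, 0 < α i),
              ∏ i, ((2:ℝ)⁻¹) ^ (α i) := by rw [Finset.mul_sum]
        _ ≤ A * 1 := mul_le_mul_of_nonneg_left (sum_prod_half_le_one j k) hA0
        _ = A := mul_one A
    have hsum : |∑ j ∈ Finset.Icc 1 k, (f j / (j.factorial : ℝ)) *
          ∑ α ∈ (Finset.Nat.antidiagonalTuple j k).filter (fun α => ∀ i, 0 < α i),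
            ∏ i, g (α i) / ((α i).factorial : ℝ)| ≤ (k : ℝ) * A := by
      refine (Finset.abs_sum_le_sum_abs _ _).trans ?_
      calc ∑ j ∈ Finset.Icc 1 k, |(f j / (j.factorial : ℝ)) *
            ∑ α ∈ (Finset.Nat.antidiagonalTuple j k).filter (fun α => ∀ i, 0 < α i),
              ∏ i, g (α i) / ((α i).factorial : ℝ)|
          ≤ ∑ _j ∈ Finset.Icc 1 k, A := Finset.sum_le_sum hj_bound
        _ = (k : ℝ) * A := by rw [Finset.sum_const, Nat.card_Icc]; simp
    have hk2 : (k : ℝ) ≤ 2 ^ k := by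
      exact_mod_cast (Nat.lt_two_pow_self (n := k)).le
    rw [abs_mul, Nat.abs_cast]
    calc (k.factorial : ℝ) * |∑ j ∈ Finset.Icc 1 k, (f j / (j.factorial : ℝ)) *
          ∑ α ∈ (Finset.Nat.antidiagonalTuple j k).filter (fun α => ∀ i, 0 < α i),
            ∏ i, g (α i) / ((α i).factorial : ℝ)|
        ≤ (k.factorial : ℝ) * ((k : ℝ) * A) :=
          mul_le_mul_of_nonneg_left hsum (by positivity)
      _ ≤ (k.factorial : ℝ) * ((2:ℝ) ^ k * A) := by
          refine mul_le_mul_of_nonneg_left ?_ (by positivity)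
          exact mul_le_mul_of_nonneg_right hk2 hA0
      _ = Cf * (4 * B * ρg) ^ k * (k.factorial : ℝ) * S := by
          rw [hA]
          have : (4 * B * ρg) ^ k = 2 ^ k * (B ^ k * (2 * ρg) ^ k) := by
            rw [← mul_pow, ← mul_pow]; ring_nf
          rw [this]; ring
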